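/- Let u, v be adjacent vertices of a connected graph Γ, with positive Perron vector α and spectral radius λ₀. Suppose that for every vertex w, the u-th column of p₁^w(A) restricted to neighbors equals the weighted adjacency entries (i.e., (p₁^w(A))_{wz} = α_w α_z for z adjacent to w, and the polynomials p_i^w are orthogonal for the w-local inner product). Then for every ℓ ≥ 0, the number of walks of length ℓ from u to v satisfies (A^ℓ)_{uv} = (α_v/α_u)·(1/λ₀)·Σ_{i=0}^d m_u(λ_i) λ_i^{ℓ+1}. -/

import Mathlib

open Matrix Polynomial

/-- Representation in a triangular polynomial family. -/
lemma poly_basis_rep (d : ℕ) (q : ℕ → Polynomial ℝ)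
    (hdeg : ∀ i ≤ d, (q i).natDegree = i) (hne : ∀ i ≤ d, q i ≠ 0) :
    ∀ n : ℕ, n ≤ d + 1 → ∀ f : Polynomial ℝ, f.degree < (n : ℕ) →
      ∃ c : Fin (d + 1) → ℝ, f = ∑ i, Polynomial.C (c i) * q i := by
  intro n
  induction n with
  | zero =>
    intro _ f hf
    have : f = 0 := by
      rw [Polynomial.degree_lt_iff_coeff_zero] at hf
      ext m; simpa using hf m (by exact_mod_cast Nat.zero_le m)
    exact ⟨0, by simp [this]⟩
  | succ n ih =>
    intro hn f hf
    have hnd : n ≤ d := by omega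
    have hlc : (q n).coeff n ≠ 0 := by
      have := hdeg n hnd
      simpa [Polynomial.leadingCoeff, this] using
        Polynomial.leadingCoeff_ne_zero.mpr (hne n hnd)
    set r : ℝ := f.coeff n / (q n).coeff n with hr
    set g : Polynomial ℝ := f - Polynomial.C r * q n with hg
    have hgdeg : g.degree < (n : ℕ) := by
      rw [Polynomial.degree_lt_iff_coeff_zero]
      intro m hm
      rcases eq_or_lt_of_le hm with hmn | hmn
      · have hmn' : m = n := by exact_mod_cast hmn.symm
        subst hmn'
        simp [hg, hr, div_mul_cancel₀ _ hlc]
      · have hmn' : n < m := by exact_mod_cast hmn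
        have h1 : f.coeff m = 0 :=
          Polynomial.coeff_eq_zero_of_degree_lt (lt_of_lt_of_le hf (by exact_mod_cast hmn'))
        have h2 : (q n).coeff m = 0 :=
          Polynomial.coeff_eq_zero_of_natDegree_lt (by rw [hdeg n hnd]; exact hmn')
        simp [hg, h1, h2]
    obtain ⟨c, hc⟩ := ih (by omega) g hgdeg
    have hnlt : n < d + 1 := by omega
    refine ⟨c + fun i => if i = ⟨n, hnlt⟩ then r else 0, ?_⟩
    have : f = g + Polynomial.C r * q n := by rw [hg]; ring
    rw [this, hc]
    simp only [Pi.add_apply, Polynomial.C_add, add_mul, Finset.sum_add_distrib]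
    congr 1
    simp [apply_ite Polynomial.C, ite_mul, Finset.sum_ite_eq']

lemma spectral_pow {V : Type*} [Fintype V] [DecidableEq V] {d : ℕ}
    (A : Matrix V V ℝ) (lam : Fin (d + 1) → ℝ) (E : Fin (d + 1) → Matrix V V ℝ)
    (hA : A = ∑ i, lam i • E i)
    (hidem : ∀ i j, E i * E j = if i = j then E i else 0)
    (hsum : ∑ i, E i = 1) :
    ∀ n : ℕ, A ^ n = ∑ k, lam k ^ n • E k := by
  intro n
  induction n with
  | zero => simpa using hsum.symm
  | succ n ih =>
    rw [pow_succ, ih, hA, Finset.sum_mul_sum]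
    rw [Finset.sum_comm]
    refine Finset.sum_congr rfl fun k _ => ?_
    rw [Finset.sum_eq_single k]
    · rw [smul_mul_assoc, mul_smul_comm, hidem, if_pos rfl, smul_smul, pow_succ]
    · intro j _ hj
      rw [smul_mul_assoc, mul_smul_comm, hidem, if_neg hj, smul_zero, smul_zero]
    · simp

lemma spectral_aeval {V : Type*} [Fintype V] [DecidableEq V] {d : ℕ}
    (A : Matrix V V ℝ) (lam : Fin (d + 1) → ℝ) (E : Fin (d + 1) → Matrix V V ℝ)
    (hA : A = ∑ i, lam i • E i)
    (hidem : ∀ i j, E i * E j = if i = j then E i else 0)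
    (hsum : ∑ i, E i = 1) (f : Polynomial ℝ) :
    Polynomial.aeval A f = ∑ k, f.eval (lam k) • E k := by
  induction f using Polynomial.induction_on' with
  | add g h hg hh =>
    rw [map_add, hg, hh, ← Finset.sum_add_distrib]
    simp [add_smul]
  | monomial n a =>
    rw [Polynomial.aeval_monomial, spectral_pow A lam E hA hidem hsum n,
      Finset.mul_sum]
    refine Finset.sum_congr rfl fun k _ => ?_
    simp [Polynomial.eval_monomial, Algebra.algebraMap_eq_smul_one, smul_smul,
      smul_mul_assoc, mul_comm]

/-- Let `u, v` be adjacent vertices of a connected graph with positive Perron vector `α`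
for the spectral radius `lam0`. Suppose each vertex `w` has a sequence of local
predistance polynomials `p w i` of degree `i`, orthogonal for the `w`-local inner
product `⟨f,g⟩_w = Σ_i m_w(λ_i) f(λ_i) g(λ_i)`, normalized by `‖p_i^w‖² = α_w² p_i^w(λ₀)`,
with `p₁^w = (α_w² λ₀ / δ_w) x` and `(p₁^w(A))_{wz} = α_w α_z` for `z` adjacent to `w`.
Then for every `ℓ`, `(A^ℓ)_{uv} = (α_v/α_u)(1/λ₀) Σ_i m_u(λ_i) λ_i^{ℓ+1}`. -/
theorem walks_between_adjacent_vertices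
    {V : Type*} [Fintype V] [DecidableEq V]
    (G : SimpleGraph V) [DecidableRel G.Adj] (hconn : G.Connected)
    (d : ℕ) (lam : Fin (d + 1) → ℝ) (hlam : StrictAnti lam)
    (E : Fin (d + 1) → Matrix V V ℝ)
    (hA : G.adjMatrix ℝ = ∑ i, lam i • E i)
    (hidem : ∀ i j, E i * E j = if i = j then E i else 0)
    (hsymm : ∀ i, (E i)ᵀ = E i)
    (hsum : ∑ i, E i = 1)
    (lam0 : ℝ) (hlam0 : lam0 = lam 0)
    (α : V → ℝ) (hpos : ∀ v, 0 < α v)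
    (heig : (G.adjMatrix ℝ).mulVec α = lam0 • α)
    (p : V → ℕ → Polynomial ℝ)
    (hdeg : ∀ w : V, ∀ i ≤ d, (p w i).natDegree = i)
    (horth : ∀ w : V, ∀ i ≤ d, ∀ j ≤ d, i ≠ j →
      ∑ k, E k w w * (p w i).eval (lam k) * (p w j).eval (lam k) = 0)
    (hnorm : ∀ w : V, ∀ i ≤ d,
      ∑ k, E k w w * (p w i).eval (lam k) ^ 2 = α w ^ 2 * (p w i).eval lam0)
    (hp1 : ∀ w : V, p w 1 = Polynomial.C (α w ^ 2 * lam0 / (G.degree w : ℝ)) * Polynomial.X)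
    (hp1col : ∀ w z : V, G.Adj w z →
      (Polynomial.aeval (G.adjMatrix ℝ) (p w 1)) w z = α w * α z)
    (hdistcol : ∀ w z : V, ∀ i ≤ d,
      (Polynomial.aeval (G.adjMatrix ℝ) (p w i)) w z =
        if G.dist w z = i then α w * α z else 0)
    (u v : V) (huv : G.Adj u v) :
    ∀ ℓ : ℕ, ((G.adjMatrix ℝ) ^ ℓ) u v =
      (α v / α u) * (1 / lam0) * ∑ i, E i u u * lam i ^ (ℓ + 1) := by
  intro ℓ
  have hune : u ≠ v := huv.ne
  -- d ≥ 1
  have hd1 : 1 ≤ d := by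
    by_contra h
    have hd0 : d = 0 := by omega
    subst hd0
    have hE : E 0 = 1 := by simpa using hsum
    have h2 := congrArg (fun M : Matrix V V ℝ => M u v) hA
    simp [hE, huv, Matrix.one_apply_ne hune, Fin.sum_univ_one] at h2
  -- lam0 > 0
  have hlam0pos : 0 < lam0 := by
    have hα := congrFun heig u
    have hmv : (G.adjMatrix ℝ).mulVec α u = ∑ z, (G.adjMatrix ℝ) u z * α z := rfl
    have hge : α v ≤ ∑ z, (G.adjMatrix ℝ) u z * α z := by
      have h1 : (G.adjMatrix ℝ) u v * α v = α v := by simp [huv]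
      rw [← h1]
      refine Finset.single_le_sum (f := fun z => (G.adjMatrix ℝ) u z * α z)
        (fun z _ => ?_) (Finset.mem_univ v)
      by_cases hz : G.Adj u z <;> simp [hz, (hpos z).le]
    have h2 : α v ≤ lam0 * α u := by
      calc α v ≤ ∑ z, (G.adjMatrix ℝ) u z * α z := hge
        _ = ((G.adjMatrix ℝ).mulVec α) u := rfl
        _ = lam0 * α u := by rw [heig]; simp
    nlinarith [hpos u, hpos v]
  have hαu : α u ≠ 0 := (hpos u).ne'
  have hdu : (0 : ℝ) < (G.degree u : ℝ) := by
    have : 0 < G.degree u := by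
      rw [SimpleGraph.degree_pos_iff_exists_adj]
      exact ⟨v, huv⟩
    exact_mod_cast this
  set c' : ℝ := α u ^ 2 * lam0 / (G.degree u : ℝ) with hc'def
  have hc'ne : c' ≠ 0 := by
    apply div_ne_zero _ hdu.ne'
    positivity
  -- the p u i are nonzero
  have hpne : ∀ i ≤ d, p u i ≠ 0 := by
    intro i hi h0
    rcases Nat.eq_zero_or_pos i with hi0 | hipos
    · subst hi0
      have h1 := hdistcol u u 0 (Nat.zero_le d)
      rw [h0] at h1
      simp [SimpleGraph.dist_self] at h1
      nlinarith [hpos u]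
    · have := hdeg u i hi
      rw [h0] at this
      simp at this
      omega
  -- interpolation polynomial
  have hinj : Set.InjOn lam (Finset.univ : Finset (Fin (d + 1))) :=
    hlam.injective.injOn
  set q : Polynomial ℝ := Lagrange.interpolate Finset.univ lam (fun k => lam k ^ ℓ)
    with hqdef
  have hqeval : ∀ k, q.eval (lam k) = lam k ^ ℓ := fun k =>
    Lagrange.eval_interpolate_at_node _ hinj (Finset.mem_univ k)
  have hqdeg : q.degree < ((d + 1 : ℕ) : WithBot ℕ) := by
    have := Lagrange.degree_interpolate_lt (fun k => lam k ^ ℓ) hinj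
    simpa only [Finset.card_univ, Fintype.card_fin] using this
  obtain ⟨c, hc⟩ := poly_basis_rep d (p u) (hdeg u) hpne (d + 1) le_rfl q hqdeg
  -- A^ℓ = q(A)
  have hAe : (G.adjMatrix ℝ) ^ ℓ = Polynomial.aeval (G.adjMatrix ℝ) q := by
    rw [spectral_pow (G.adjMatrix ℝ) lam E hA hidem hsum ℓ,
      spectral_aeval (G.adjMatrix ℝ) lam E hA hidem hsum q]
    exact Finset.sum_congr rfl fun k _ => by rw [hqeval k]
  set i1 : Fin (d + 1) := ⟨1, by omega⟩ with hi1def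
  -- entry computation
  have hdist1 : G.dist u v = 1 := SimpleGraph.dist_eq_one_iff_adj.mpr huv
  have hone : ((G.adjMatrix ℝ) ^ ℓ) u v = c i1 * (α u * α v) := by
    rw [hAe, hc, map_sum, Matrix.sum_apply]
    rw [Finset.sum_eq_single i1]
    · rw [_root_.map_mul, Polynomial.aeval_C]
      have h1 : ((i1 : Fin (d+1)) : ℕ) = 1 := rfl
      have h2 := hdistcol u v 1 hd1
      simp only [Algebra.algebraMap_eq_smul_one, smul_mul_assoc, one_mul,
        Matrix.smul_apply, smul_eq_mul]
      rw [h2, if_pos hdist1]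
    · intro i _ hi
      rw [_root_.map_mul, Polynomial.aeval_C]
      have h2 := hdistcol u v i (Nat.lt_succ_iff.mp i.isLt)
      have h3 : G.dist u v ≠ (i : ℕ) := by
        rw [hdist1]
        intro h
        exact hi (Fin.ext h.symm)
      simp only [Algebra.algebraMap_eq_smul_one, smul_mul_assoc, one_mul,
        Matrix.smul_apply, smul_eq_mul]
      rw [h2, if_neg h3, mul_zero]
    · simp
  -- key evaluation identity
  have hkey : ∀ k, lam k ^ ℓ = ∑ i : Fin (d + 1), c i * (p u i).eval (lam k) := by
    intro k
    rw [← hqeval k, hc]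
    simp [Polynomial.eval_finset_sum]
  -- compute c i1
  set T : ℝ := ∑ i, E i u u * lam i ^ (ℓ + 1) with hTdef
  have hS : c' * T = c i1 * (α u ^ 2 * (p u 1).eval lam0) := by
    have e1 : ∑ k, E k u u * (p u 1).eval (lam k) * lam k ^ ℓ
        = ∑ i : Fin (d+1), c i *
          ∑ k, E k u u * (p u (i : ℕ)).eval (lam k) * (p u 1).eval (lam k) := by
      have hterm : ∀ k : Fin (d+1), E k u u * (p u 1).eval (lam k) * lam k ^ ℓ
          = ∑ i : Fin (d+1),
              c i * (E k u u * (p u (i : ℕ)).eval (lam k) * (p u 1).eval (lam k)) := by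
        intro k
        rw [hkey k, Finset.mul_sum]
        exact Finset.sum_congr rfl fun i _ => by ring
      rw [Finset.sum_congr rfl (fun k _ => hterm k), Finset.sum_comm]
      exact Finset.sum_congr rfl fun i _ => (Finset.mul_sum _ _ _).symm
    have e2 : ∑ k, E k u u * (p u 1).eval (lam k) * lam k ^ ℓ = c' * T := by
      rw [hTdef, Finset.mul_sum]
      refine Finset.sum_congr rfl fun k _ => ?_
      rw [hp1 u]
      simp only [Polynomial.eval_mul, Polynomial.eval_C, Polynomial.eval_X]
      rw [pow_succ]
      ring
    have e3 : ∑ i : Fin (d+1), c i *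
          ∑ k, E k u u * (p u (i : ℕ)).eval (lam k) * (p u 1).eval (lam k)
        = c i1 * (α u ^ 2 * (p u 1).eval lam0) := by
      rw [Finset.sum_eq_single i1]
      · congr 1
        have h1 : ((i1 : Fin (d+1)) : ℕ) = 1 := rfl
        rw [h1, ← hnorm u 1 hd1]
        exact Finset.sum_congr rfl fun k _ => by ring
      · intro i _ hi
        have hii : (i : ℕ) ≠ 1 := fun h => hi (Fin.ext h)
        rw [horth u (i : ℕ) (Nat.lt_succ_iff.mp i.isLt) 1 hd1 hii, mul_zero]
      · simp
    rw [← e2, e1, e3]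
  have hp1lam0 : (p u 1).eval lam0 = c' * lam0 := by
    rw [hp1 u]; simp [hc'def]
  rw [hp1lam0] at hS
  have hT : T = c i1 * (α u ^ 2 * lam0) := by
    apply mul_left_cancel₀ hc'ne
    rw [hS]; ring
  rw [hone, hT]
  field_simp
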